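/- Let (b_n)_{n≥1} be a complex sequence with Σ_{n≥1} |b_n|² = 1 and b_1 ≠ 0, and define a_0 = 1 and a_n = Σ_{k=1}^{n} |b_k|² a_{n−k} for n ≥ 1. Then the sequence (a_n) is bounded below by a positive constant (i.e., there exists ε > 0 with a_n ≥ ε for all n) if and only if Σ_{n≥1} n |b_n|² < ∞. -/

import Mathlib

open Filter Finset Topology

/-- For the renewal sequence `a_0 = 1`, `a_n = Σ_{k=1}^n |b_k|² a_{n−k}` of a unit-norm `ℓ²`
sequence `(b_n)_{n≥1}` with `b_1 ≠ 0`, the sequence `(a_n)` is bounded below by a positive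
constant if and only if `Σ_{n≥1} n |b_n|² < ∞`. -/
theorem renewal_bounded_below_iff (b : ℕ → ℂ) (a : ℕ → ℝ)
    (hb : HasSum (fun n : ℕ => ‖b (n + 1)‖ ^ 2) 1) (hb1 : b 1 ≠ 0)
    (ha0 : a 0 = 1)
    (ha : ∀ n : ℕ, 1 ≤ n → a n = ∑ k ∈ Finset.Icc 1 n, ‖b k‖ ^ 2 * a (n - k)) :
    (∃ ε : ℝ, 0 < ε ∧ ∀ n : ℕ, ε ≤ a n) ↔
      Summable (fun n : ℕ => ((n + 1 : ℕ) : ℝ) * ‖b (n + 1)‖ ^ 2) := by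
  set q : ℕ → ℝ := fun n => ‖b (n + 1)‖ ^ 2 with hqdef
  have qnn : ∀ n, 0 ≤ q n := fun n => by positivity
  have p1pos : 0 < q 0 := by
    have : 0 < ‖b 1‖ := norm_pos_iff.2 hb1
    simpa [hqdef] using pow_pos this 2
  -- recurrence in `range` form
  have harec : ∀ n : ℕ, a (n + 1) = ∑ i ∈ Finset.range (n + 1), q i * a (n - i) := by
    intro n
    rw [ha (n + 1) (Nat.succ_le_succ (Nat.zero_le n)), ← Finset.Ico_add_one_right_eq_Icc,
      Finset.sum_Ico_eq_sum_range]
    refine Finset.sum_congr (by norm_num) fun i hi => ?_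
    have h1 : 1 + i = i + 1 := by omega
    have h2 : n + 1 - (1 + i) = n - i := by omega
    rw [h2, h1]
  -- tail sequence
  set r : ℕ → ℝ := fun i => 1 - ∑ j ∈ Finset.range i, q j with hrdef
  have hr0 : r 0 = 1 := by simp [hrdef]
  have hrstep : ∀ i, r (i + 1) = r i - q i := by
    intro i; simp [hrdef, Finset.sum_range_succ]; ring
  have rnn : ∀ i, 0 ≤ r i := by
    intro i
    have := sum_le_hasSum (Finset.range i) (fun j _ => qnn j) hb
    simp only [hrdef]
    linarith
  have apos : ∀ n, 0 < a n := by
    intro n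
    induction n using Nat.strong_induction_on with
    | _ n ih =>
      match n with
      | 0 => rw [ha0]; norm_num
      | Nat.succ m =>
        rw [harec m]
        refine Finset.sum_pos' (fun i hi => mul_nonneg (qnn i) ?_) ⟨0, Finset.mem_range.2 m.succ_pos, ?_⟩
        · exact (ih (m - i) (by omega)).le
        · have := ih m (by omega)
          simpa using mul_pos p1pos this
  -- the renewal identity
  have hT : ∀ n, ∑ k ∈ Finset.range (n + 1), a (n - k) * r k = 1 := by
    intro n
    induction n with
    | zero => simp [ha0, hr0]
    | succ n ihn =>
      rw [Finset.sum_range_succ']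
      have e1 : ∑ k ∈ Finset.range (n + 1), a (n + 1 - (k + 1)) * r (k + 1) =
          (∑ k ∈ Finset.range (n + 1), a (n - k) * r k) -
            ∑ k ∈ Finset.range (n + 1), a (n - k) * q k := by
        rw [← Finset.sum_sub_distrib]
        refine Finset.sum_congr rfl fun k hk => ?_
        have h2 : n + 1 - (k + 1) = n - k := by omega
        rw [h2, hrstep]; ring
      have e2 : a (n + 1) = ∑ k ∈ Finset.range (n + 1), a (n - k) * q k := by
        rw [harec n]
        exact Finset.sum_congr rfl fun k _ => mul_comm _ _
      rw [e1, ihn, Nat.sub_zero, hr0, ← e2]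
      ring
  have ale1 : ∀ n, a n ≤ 1 := by
    intro n
    have h := Finset.single_le_sum (f := fun k => a (n - k) * r k)
      (fun k _ => mul_nonneg (apos _).le (rnn k)) (Finset.mem_range.2 n.succ_pos)
    rw [hT n] at h
    simpa [hr0] using h
  -- partial sum identity for r
  have Rsum : ∀ N, ∑ k ∈ Finset.range N, r k =
      (∑ j ∈ Finset.range N, ((j + 1 : ℕ) : ℝ) * q j) + N * r N := by
    intro N
    induction N with
    | zero => simp
    | succ N ihN =>
      rw [Finset.sum_range_succ, ihN, Finset.sum_range_succ, hrstep N]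
      push_cast
      ring
  constructor
  · -- forward direction
    rintro ⟨ε, hε, hεa⟩
    refine summable_of_sum_range_le (c := 1 / ε) (fun n => mul_nonneg (Nat.cast_nonneg _) (qnn n)) fun N => ?_
    have h1 : ε * ∑ k ∈ Finset.range (N + 1), r k ≤ 1 := by
      rw [Finset.mul_sum, ← hT N]
      exact Finset.sum_le_sum fun k _ => mul_le_mul_of_nonneg_right (hεa _) (rnn k)
    have h2 : ∑ k ∈ Finset.range N, r k ≤ ∑ k ∈ Finset.range (N + 1), r k := by
      rw [Finset.sum_range_succ]
      linarith [rnn N]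
    have h3 := Rsum N
    have hNr : 0 ≤ (N : ℝ) * r N := mul_nonneg (Nat.cast_nonneg N) (rnn N)
    have h4 : ∑ k ∈ Finset.range (N + 1), r k ≤ 1 / ε := by
      rw [le_div_iff₀ hε]
      linarith [mul_comm ε (∑ k ∈ Finset.range (N + 1), r k)]
    linarith
  · -- backward direction
    intro hs
    set μ : ℝ := ∑' n, ((n + 1 : ℕ) : ℝ) * q n with hμdef
    have rtail : ∀ N : ℕ, HasSum (fun j => q (j + N)) (r N) := by
      intro N
      rw [hasSum_nat_add_iff (f := q) N]
      have : r N + ∑ i ∈ Finset.range N, q i = 1 := by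
        simp only [hrdef]; ring
      rw [this]
      exact hb
    have hNr : ∀ N : ℕ, (N : ℝ) * r N ≤ μ := by
      intro N
      have t1 : HasSum (fun j => (N : ℝ) * q (j + N)) ((N : ℝ) * r N) := (rtail N).mul_left _
      have t2 : Summable (fun j => ((j + N + 1 : ℕ) : ℝ) * q (j + N)) := by
        have := (summable_nat_add_iff (f := fun n => ((n + 1 : ℕ) : ℝ) * q n) N).2 hs
        simpa using this
      have t3 : (N : ℝ) * r N ≤ ∑' j, ((j + N + 1 : ℕ) : ℝ) * q (j + N) := by
        rw [← t1.tsum_eq]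
        refine Summable.tsum_le_tsum (fun j => ?_) t1.summable t2
        have : (N : ℝ) ≤ ((j + N + 1 : ℕ) : ℝ) := by exact_mod_cast by omega
        exact mul_le_mul_of_nonneg_right this (qnn _)
      have t4 : ∑' j, ((j + N + 1 : ℕ) : ℝ) * q (j + N) ≤ μ := by
        have h5 := Summable.sum_add_tsum_nat_add (f := fun n => ((n + 1 : ℕ) : ℝ) * q n) N hs
        have h6 : 0 ≤ ∑ i ∈ Finset.range N, ((i + 1 : ℕ) : ℝ) * q i :=
          Finset.sum_nonneg fun i _ => mul_nonneg (Nat.cast_nonneg _) (qnn i)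
        have h7 : ∑' j, ((j + N + 1 : ℕ) : ℝ) * q (j + N)
            = ∑' (i : ℕ), ((i + N + 1 : ℕ) : ℝ) * q (i + N) := rfl
        rw [h7]
        rw [hμdef, ← h5]
        linarith
      linarith
    have hrsum : Summable r := by
      refine summable_of_sum_range_le rnn (c := μ + μ) fun N => ?_
      have h1 := Rsum N
      have h2 : ∑ j ∈ Finset.range N, ((j + 1 : ℕ) : ℝ) * q j ≤ μ :=
        Summable.sum_le_tsum (Finset.range N) (fun i _ => mul_nonneg (Nat.cast_nonneg _) (qnn i)) hs
      linarith [hNr N]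
    by_contra hc
    push_neg at hc
    -- construct subsequence with a (φ j) → 0 and φ j → ∞
    have hne : ∀ j : ℕ, (Finset.range (j + 1)).Nonempty := fun j => ⟨0, Finset.mem_range.2 j.succ_pos⟩
    have hcj : ∀ j : ℕ, ∃ n, a n < min (1 / ((j : ℝ) + 1)) ((Finset.range (j + 1)).inf' (hne j) a) := by
      intro j
      refine hc _ (lt_min (by positivity) ?_)
      exact (Finset.lt_inf'_iff _).2 fun i _ => apos i
    choose φ hφ using hcj
    have hφgt : ∀ j, j < φ j := by
      intro j
      by_contra h
      push_neg at h
      have h1 : (Finset.range (j + 1)).inf' (hne j) a ≤ a (φ j) :=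
        Finset.inf'_le a (Finset.mem_range.2 (Nat.lt_succ_of_le h))
      have h2 := (hφ j).trans_le (min_le_right _ _)
      linarith
    have hφtop : Tendsto φ atTop atTop := tendsto_atTop_mono (fun j => (hφgt j).le) tendsto_id
    have haφ : Tendsto (fun j => a (φ j)) atTop (𝓝 0) := by
      refine squeeze_zero (fun j => (apos _).le)
        (fun j => ((hφ j).trans_le (min_le_left _ _)).le) ?_
      exact tendsto_one_div_add_atTop_nhds_zero_nat
    have hstep : ∀ m : ℕ, q 0 * a m ≤ a (m + 1) := by
      intro m
      rw [harec m]
      have := Finset.single_le_sum (f := fun i => q i * a (m - i))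
        (fun i _ => mul_nonneg (qnn i) (apos _).le) (Finset.mem_range.2 m.succ_pos)
      simpa using this
    have key : ∀ k, Tendsto (fun j => a (φ j - k)) atTop (𝓝 0) := by
      intro k
      induction k with
      | zero => simpa using haφ
      | succ k ihk =>
        have hev : ∀ᶠ j in atTop, a (φ j - (k + 1)) ≤ a (φ j - k) / q 0 := by
          filter_upwards [hφtop.eventually_ge_atTop (k + 1)] with j hj
          have h1 : φ j - k = (φ j - (k + 1)) + 1 := by omega
          have h2 := hstep (φ j - (k + 1))
          rw [← h1] at h2
          rw [le_div_iff₀ p1pos]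
          linarith [mul_comm (a (φ j - (k + 1))) (q 0)]
        have h3 : Tendsto (fun j => a (φ j - k) / q 0) atTop (𝓝 (0 / q 0)) := ihk.div_const _
        rw [zero_div] at h3
        exact squeeze_zero' (Eventually.of_forall fun j => (apos _).le) hev h3
    -- dominated convergence
    set F : ℕ → ℕ → ℝ := fun j i => if i ≤ φ j then a (φ j - i) * r i else 0 with hFdef
    have hFsum : ∀ j, HasSum (F j) 1 := by
      intro j
      have h0 : ∀ i ∉ Finset.range (φ j + 1), F j i = 0 := by
        intro i hi
        rw [Finset.mem_range] at hi
        simp only [hFdef]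
        rw [if_neg (by omega)]
      have h1 := hasSum_sum_of_ne_finset_zero (L := SummationFilter.unconditional ℕ) h0
      have h2 : ∑ i ∈ Finset.range (φ j + 1), F j i = 1 := by
        rw [← hT (φ j)]
        refine Finset.sum_congr rfl fun i hi => ?_
        rw [Finset.mem_range] at hi
        simp only [hFdef]
        rw [if_pos (by omega)]
      rwa [h2] at h1
    have hFb : ∀ᶠ j in atTop, ∀ i, ‖F j i‖ ≤ r i := by
      refine Eventually.of_forall fun j i => ?_
      simp only [hFdef]
      split_ifs with h
      · rw [Real.norm_eq_abs, abs_of_nonneg (mul_nonneg (apos _).le (rnn i))]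
        calc a (φ j - i) * r i ≤ 1 * r i :=
              mul_le_mul_of_nonneg_right (ale1 _) (rnn i)
          _ = r i := one_mul _
      · simpa using rnn i
    have hFt : ∀ i, Tendsto (fun j => F j i) atTop (𝓝 0) := by
      intro i
      have h := (key i).mul_const (r i)
      rw [zero_mul] at h
      refine h.congr' ?_
      filter_upwards [hφtop.eventually_ge_atTop i] with j hj
      simp only [hFdef]
      rw [if_pos hj]
    have hlim := tendsto_tsum_of_dominated_convergence (g := fun _ : ℕ => (0 : ℝ)) hrsum hFt hFb
    rw [tsum_zero] at hlim
    have h1 : (fun j => ∑' i, F j i) = fun _ => (1 : ℝ) := funext fun j => (hFsum j).tsum_eq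
    rw [h1] at hlim
    exact zero_ne_one (tendsto_nhds_unique tendsto_const_nhds hlim).symm
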